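/- Defining operators f_3 : 0x1 ↦ 1x̄0 on length-3 binary strings and f_4 : 0xy1 ↦ 1ȳx̄0 on length-4 binary strings (applied to contiguous substrings), for every k ≥ 3 the length-(3k−1) string 0…01 can be transformed into 10…0 by a sequence of applications of f_3 and f_4, and the number of applications used by the recursive construction exceeds 2^{k−1}. -/
import Mathlib

/-- One rewriting step: apply `f₃ : 0x1 ↦ 1x̄0` or `f₄ : 0xy1 ↦ 1ȳx̄0` to a
contiguous substring of a binary string (`false` = 0, `true` = 1). -/
def rewriteStep (s t : List Bool) : Prop :=
  ∃ u v : List Bool,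
    (∃ x : Bool, s = u ++ [false, x, true] ++ v ∧ t = u ++ [true, !x, false] ++ v) ∨
    (∃ x y : Bool, s = u ++ [false, x, y, true] ++ v ∧
      t = u ++ [true, !y, !x, false] ++ v)

def mlen : ℕ → ℕ
  | 0 => 2
  | j + 1 => 2 * mlen j + 2

def ch : ℕ → ℕ → List Bool
  | 0, i =>
      if i = 0 then [false, false, false, false, true]
      else if i = 1 then [false, true, true, true, false]
      else [true, false, false, false, false]
  | j + 1, i =>
      if i = 0 then List.replicate (3 * j + 7) false ++ [true]
      else if i ≤ mlen j + 1 then false :: (ch j (i - 1) ++ [true, false])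
      else if i ≤ 2 * mlen j + 1 then false :: true :: (ch j (i - mlen j - 1) ++ [false])
      else true :: List.replicate (3 * j + 7) false

lemma mlen_eq (j : ℕ) : mlen j = 2 ^ (j + 2) - 2 := by
  induction j with
  | zero => rfl
  | succ j ih =>
    have h2 : (2:ℕ) ^ 1 ≤ 2 ^ (j + 2) := Nat.pow_le_pow_right (by norm_num) (by omega)
    norm_num at h2
    have h3 : (2:ℕ) ^ (j + 1 + 2) = 2 ^ (j + 2) * 2 := by ring
    simp only [mlen, ih, h3]
    omega

lemma mlen_ge (j : ℕ) : 2 ≤ mlen j := by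
  have h2 : 4 ≤ 2 ^ (j + 2) := by
    calc (4:ℕ) = 2 ^ 2 := rfl
    _ ≤ 2 ^ (j + 2) := Nat.pow_le_pow_right (by norm_num) (by omega)
  rw [mlen_eq]; omega

lemma mlen_gt (j : ℕ) (hj : 1 ≤ j) : 2 ^ (j + 1) < mlen j := by
  have h2 : 4 ≤ 2 ^ (j + 1) := by
    calc (4:ℕ) = 2 ^ 2 := rfl
    _ ≤ 2 ^ (j + 1) := Nat.pow_le_pow_right (by norm_num) (by omega)
  have h3 : (2:ℕ) ^ (j + 2) = 2 ^ (j + 1) * 2 := by ring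
  rw [mlen_eq, h3]
  omega

lemma ch_zero (j : ℕ) : ch j 0 = List.replicate (3 * j + 4) false ++ [true] := by
  cases j with
  | zero => rfl
  | succ j =>
    show (if (0:ℕ) = 0 then List.replicate (3 * j + 7) false ++ [true] else _) = _
    rw [if_pos rfl, show 3 * (j + 1) + 4 = 3 * j + 7 from by omega]

lemma ch_last (j : ℕ) : ch j (mlen j) = true :: List.replicate (3 * j + 4) false := by
  cases j with
  | zero => rfl
  | succ j =>
    have h := mlen_ge j
    have h1 : mlen (j + 1) = 2 * mlen j + 2 := rfl
    simp only [ch, h1]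
    rw [if_neg (by omega), if_neg (by omega), if_neg (by omega),
      show 3 * (j + 1) + 4 = 3 * j + 7 from by omega]

lemma rewriteStep_append (a b s t : List Bool) (h : rewriteStep s t) :
    rewriteStep (a ++ s ++ b) (a ++ t ++ b) := by
  obtain ⟨u, v, h⟩ := h
  refine ⟨a ++ u, v ++ b, ?_⟩
  rcases h with ⟨x, hs, ht⟩ | ⟨x, y, hs, ht⟩
  · exact Or.inl ⟨x, by simp [hs, ht]⟩
  · exact Or.inr ⟨x, y, by simp [hs, ht]⟩

lemma ch_step (j : ℕ) : ∀ i < mlen j, rewriteStep (ch j i) (ch j (i + 1)) := by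
  induction j with
  | zero =>
    intro i hi
    have hm : mlen 0 = 2 := rfl
    rw [hm] at hi
    interval_cases i
    · exact ⟨[false], [], Or.inr ⟨false, false, by constructor <;> rfl⟩⟩
    · exact ⟨[], [false], Or.inr ⟨true, true, by constructor <;> rfl⟩⟩
  | succ j ih =>
    intro i hi
    have hge := mlen_ge j
    have hm : mlen (j + 1) = 2 * mlen j + 2 := rfl
    rw [hm] at hi
    rcases Nat.eq_zero_or_pos i with h0 | h0
    · -- i = 0 : f₃ at the right end
      subst h0
      have hs : ch (j + 1) 0 = List.replicate (3 * j + 7) false ++ [true] := rfl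
      have ht : ch (j + 1) 1 = false :: (ch j 0 ++ [true, false]) := by
        simp only [ch]
        rw [if_neg (by omega), if_pos (by omega)]
      refine ⟨List.replicate (3 * j + 5) false, [], Or.inl ⟨false, ?_, ?_⟩⟩
      · rw [hs, show 3 * j + 7 = (3 * j + 5) + 2 from by omega, List.replicate_add]
        simp
      · rw [ht, ch_zero, List.append_assoc]
        simp only [Bool.not_false, List.append_nil]
        conv_rhs => rw [show (3 * j + 5 : ℕ) = (3 * j + 4) + 1 from by omega,
          List.replicate_succ]
        rfl
    rcases Nat.lt_or_ge i (mlen j + 1) with h1 | h1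
    · -- 1 ≤ i ≤ mlen j : first inner chain
      have hs : ch (j + 1) i = false :: (ch j (i - 1) ++ [true, false]) := by
        simp only [ch]; rw [if_neg (by omega), if_pos (by omega)]
      have ht : ch (j + 1) (i + 1) = false :: (ch j i ++ [true, false]) := by
        simp only [ch]
        rw [if_neg (by omega), if_pos (by omega), show i + 1 - 1 = i from by omega]
      rw [hs, ht]
      have h2 := rewriteStep_append [false] [true, false] _ _
        (ih (i - 1) (by omega))
      rw [show i - 1 + 1 = i from by omega] at h2
      simpa using h2
    rcases Nat.eq_or_lt_of_le h1 with h2 | h2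
    · -- i = mlen j + 1 : junction between the two inner chains
      have hs : ch (j + 1) i = false :: (ch j (mlen j) ++ [true, false]) := by
        simp only [ch]
        rw [if_neg (by omega), if_pos (by omega), show i - 1 = mlen j from by omega]
      have ht : ch (j + 1) (i + 1) = false :: true :: (ch j 1 ++ [false]) := by
        simp only [ch]
        rw [if_neg (by omega), if_neg (by omega), if_pos (by omega),
          show i + 1 - mlen j - 1 = 1 from by omega]
      rw [hs, ht, ch_last]
      have h3 := rewriteStep_append [false, true] [false] _ _ (ih 0 (by omega))
      rw [ch_zero] at h3
      simpa using h3
    rcases Nat.lt_or_ge i (2 * mlen j + 1) with h3 | h3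
    · -- second inner chain
      have hs : ch (j + 1) i = false :: true :: (ch j (i - mlen j - 1) ++ [false]) := by
        simp only [ch]; rw [if_neg (by omega), if_neg (by omega), if_pos (by omega)]
      have ht : ch (j + 1) (i + 1) = false :: true :: (ch j (i - mlen j) ++ [false]) := by
        simp only [ch]
        rw [if_neg (by omega), if_neg (by omega), if_pos (by omega),
          show i + 1 - mlen j - 1 = i - mlen j from by omega]
      rw [hs, ht]
      have h4 := rewriteStep_append [false, true] [false] _ _
        (ih (i - mlen j - 1) (by omega))
      rw [show i - mlen j - 1 + 1 = i - mlen j from by omega] at h4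
      simpa using h4
    · -- i = 2 * mlen j + 1 : final f₃ at the left end
      have hs : ch (j + 1) i = false :: true :: (ch j (mlen j) ++ [false]) := by
        simp only [ch]
        rw [if_neg (by omega), if_neg (by omega), if_pos (by omega),
          show i - mlen j - 1 = mlen j from by omega]
      have ht : ch (j + 1) (i + 1) = true :: List.replicate (3 * j + 7) false := by
        simp only [ch]
        rw [if_neg (by omega), if_neg (by omega), if_neg (by omega)]
      refine ⟨[], List.replicate (3 * j + 5) false, Or.inl ⟨true, ?_, ?_⟩⟩
      · rw [hs, ch_last]
        have e : List.replicate (3 * j + 4) false ++ [false]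
            = List.replicate (3 * j + 5) false :=
          (List.replicate_succ' (n := 3 * j + 4) (a := false)).symm
        simp only [List.cons_append, List.nil_append]
        rw [e]
      · rw [ht, show (3 * j + 7 : ℕ) = 2 + (3 * j + 5) from by omega, List.replicate_add]
        simp

/-- for every `k ≥ 3`, the length-`(3k−1)` string `0…01` can be
transformed into `10…0` by successive applications of `f₃` and `f₄`, using a
number of applications exceeding `2^(k−1)`. -/
theorem rewrite_chain_exponential (k : ℕ) (hk : 3 ≤ k) :
    ∃ (m : ℕ) (f : ℕ → List Bool),
      2 ^ (k - 1) < m ∧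
      f 0 = List.replicate (3 * k - 2) false ++ [true] ∧
      f m = true :: List.replicate (3 * k - 2) false ∧
      ∀ i < m, rewriteStep (f i) (f (i + 1)) := by
  refine ⟨mlen (k - 2), ch (k - 2), ?_, ?_, ?_, ch_step (k - 2)⟩
  · have h := mlen_gt (k - 2) (by omega)
    rw [show k - 2 + 1 = k - 1 from by omega] at h
    exact h
  · rw [ch_zero, show 3 * (k - 2) + 4 = 3 * k - 2 from by omega]
  · rw [ch_last, show 3 * (k - 2) + 4 = 3 * k - 2 from by omega]
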